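/- Power transformation of a linear comparison system: Suppose scalars ã_ij (i,j ∈ {1,…,m}) with ã_ij ≥ 0 for i ≠ j, positive constants c̃_ij > 0 for i ≠ j, and nonnegative differentiable functions v_i : [0,∞) → ℝ_{≥0} satisfy v_i'(t) ≤ ∑_j ã_ij v_j(t) for all t, and ã_ii + ∑_{j≠i} ã_ij c̃_ij < 0 for every i. Then for any integer d ≥ 1, the functions V_i = v_i^d satisfy V_i'(t) ≤ ∑_j a_ij V_j(t), where a_ii = d·ã_ii + (d−1)·∑_{j≠i} ã_ij c̃_ij and a_ij = ã_ij · c̃_ij^{1−d} for j ≠ i; moreover a_ii + ∑_{j≠i} a_ij (c̃_ij)^d < 0 for every i. -/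

import Mathlib

open Finset

lemma young_nat (k : ℕ) {x y : ℝ} (hx : 0 ≤ x) (hy : 0 ≤ y) :
    ((k : ℝ) + 1) * (x ^ k * y) ≤ (k : ℝ) * x ^ (k + 1) + y ^ (k + 1) := by
  induction k with
  | zero => simp
  | succ n ih =>
    have key : x ^ n * x * y + x * (y ^ n * y) ≤ x ^ n * x * x + y ^ n * y * y := by
      rcases le_total x y with h | h
      · have hp : x ^ n * x ≤ y ^ n * y := by
          rw [← pow_succ, ← pow_succ]; exact pow_le_pow_left₀ hx h _
        nlinarith [mul_nonneg (sub_nonneg.2 h) (sub_nonneg.2 hp)]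
      · have hp : y ^ n * y ≤ x ^ n * x := by
          rw [← pow_succ, ← pow_succ]; exact pow_le_pow_left₀ hy h _
        nlinarith [mul_nonneg (sub_nonneg.2 h) (sub_nonneg.2 hp)]
    have hmul := mul_le_mul_of_nonneg_left ih hx
    simp only [pow_succ] at *
    push_cast
    nlinarith [hmul, key]

lemma young_scaled (k : ℕ) {u w c : ℝ} (hu : 0 ≤ u) (hw : 0 ≤ w) (hc : 0 < c) :
    ((k : ℝ) + 1) * (u ^ k * w) ≤ (k : ℝ) * c * u ^ (k + 1) + (c ^ k)⁻¹ * w ^ (k + 1) := by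
  set c' : ℝ := c ^ (((k : ℝ) + 1))⁻¹ with hc'def
  have hc' : 0 < c' := Real.rpow_pos_of_pos hc _
  have h1 : c' ^ (k + 1) = c := by
    rw [hc'def, ← Real.rpow_natCast (c ^ (((k : ℝ) + 1))⁻¹) (k+1), ← Real.rpow_mul hc.le]
    push_cast
    rw [inv_mul_cancel₀ (by positivity), Real.rpow_one]
  have hy : 0 ≤ w / c' ^ k := by positivity
  have h := young_nat k (mul_nonneg hu hc'.le) hy
  have hL : (u * c') ^ k * (w / c' ^ k) = u ^ k * w := by
    field_simp [mul_pow]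
    ring
  have hR1 : (u * c') ^ (k + 1) = c * u ^ (k+1) := by
    rw [mul_pow, h1]; ring
  have hR2 : (w / c' ^ k) ^ (k + 1) = (c ^ k)⁻¹ * w ^ (k+1) := by
    rw [div_pow, ← pow_mul, mul_comm k (k+1), pow_mul, h1]
    field_simp
  rw [hL, hR1, hR2] at h
  nlinarith [h]

/-- Power transformation of a linear comparison system: if nonnegative
differentiable `v i` satisfy `v' ≤ Ã v` with `Ã` Metzler and
`ã_ii + ∑_{j≠i} ã_ij c̃_ij < 0`, then `V i = (v i)^d` satisfies
`V' ≤ A V` for the explicitly transformed matrix `A`, which moreover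
satisfies `a_ii + ∑_{j≠i} a_ij c̃_ij^d < 0`. -/
theorem power_transform_comparison_system (m d : ℕ) (hd : 1 ≤ d)
    (ta : Fin m → Fin m → ℝ) (hta : ∀ i j, i ≠ j → 0 ≤ ta i j)
    (tc : Fin m → Fin m → ℝ) (htc : ∀ i j, i ≠ j → 0 < tc i j)
    (v v' : ℝ → Fin m → ℝ)
    (hnonneg : ∀ t i, 0 ≤ v t i)
    (hderiv : ∀ i t, HasDerivAt (fun s => v s i) (v' t i) t)
    (hineq : ∀ t i, v' t i ≤ ∑ j, ta i j * v t j)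
    (hrow : ∀ i, ta i i + ∑ j ∈ univ.erase i, ta i j * tc i j < 0)
    (a : Fin m → Fin m → ℝ)
    (ha_diag : ∀ i, a i i =
      (d : ℝ) * ta i i + ((d : ℝ) - 1) * ∑ j ∈ univ.erase i, ta i j * tc i j)
    (ha_off : ∀ i j, i ≠ j → a i j = ta i j * tc i j ^ ((1 : ℤ) - d)) :
    (∀ t i, HasDerivAt (fun s => v s i ^ d) ((d : ℝ) * v t i ^ (d - 1) * v' t i) t) ∧
    (∀ t i, (d : ℝ) * v t i ^ (d - 1) * v' t i ≤ ∑ j, a i j * v t j ^ d) ∧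
    (∀ i, a i i + ∑ j ∈ univ.erase i, a i j * tc i j ^ d < 0) := by
  obtain ⟨k, rfl⟩ : ∃ k, d = k + 1 := ⟨d - 1, by omega⟩
  refine ⟨fun t i => (hderiv i t).pow _, fun t i => ?_, fun i => ?_⟩
  · -- the differential inequality for V = v ^ d
    simp only [Nat.add_sub_cancel]
    have hcast : ((k + 1 : ℕ) : ℝ) = (k : ℝ) + 1 := by push_cast; ring
    rw [hcast]
    have step1 : ((k:ℝ)+1) * v t i ^ k * v' t i
        ≤ ((k:ℝ)+1) * v t i ^ k * ∑ j, ta i j * v t j :=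
      mul_le_mul_of_nonneg_left (hineq t i)
        (mul_nonneg (by positivity) (pow_nonneg (hnonneg t i) k))
    have step2 : ((k:ℝ)+1) * v t i ^ k * ∑ j, ta i j * v t j
        = ((k:ℝ)+1) * v t i ^ k * (ta i i * v t i)
          + ∑ j ∈ univ.erase i, ((k:ℝ)+1) * v t i ^ k * (ta i j * v t j) := by
      rw [Finset.mul_sum,
        ← Finset.add_sum_erase univ (fun j => ((k:ℝ)+1) * v t i ^ k * (ta i j * v t j))
          (mem_univ i)]
    have step3 : ∀ j ∈ univ.erase i, ((k:ℝ)+1) * v t i ^ k * (ta i j * v t j)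
        ≤ ta i j * tc i j * ((k:ℝ) * v t i ^ (k+1)) + a i j * v t j ^ (k+1) := by
      intro j hj
      have hij : i ≠ j := (Finset.ne_of_mem_erase hj).symm
      have hY := young_scaled k (hnonneg t i) (hnonneg t j) (htc i j hij)
      have hm := mul_le_mul_of_nonneg_left hY (hta i j hij)
      rw [ha_off i j hij]
      have hz : tc i j ^ ((1:ℤ) - ((k+1 : ℕ) : ℤ)) = (tc i j ^ k)⁻¹ := by
        rw [show (1:ℤ) - ((k+1 : ℕ) : ℤ) = -(k:ℤ) by push_cast; ring, zpow_neg, zpow_natCast]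
      rw [hz]
      nlinarith [hm]
    calc ((k:ℝ)+1) * v t i ^ k * v' t i
        ≤ ((k:ℝ)+1) * v t i ^ k * ∑ j, ta i j * v t j := step1
      _ = ((k:ℝ)+1) * v t i ^ k * (ta i i * v t i)
          + ∑ j ∈ univ.erase i, ((k:ℝ)+1) * v t i ^ k * (ta i j * v t j) := step2
      _ ≤ ((k:ℝ)+1) * v t i ^ k * (ta i i * v t i)
          + ∑ j ∈ univ.erase i,
            (ta i j * tc i j * ((k:ℝ) * v t i ^ (k+1)) + a i j * v t j ^ (k+1)) :=
        add_le_add (le_refl _) (Finset.sum_le_sum step3)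
      _ = ∑ j, a i j * v t j ^ (k+1) := by
        rw [Finset.sum_add_distrib, ← Finset.sum_mul,
          ← Finset.add_sum_erase univ (fun j => a i j * v t j ^ (k+1)) (mem_univ i),
          ha_diag i]
        push_cast
        ring
  · -- the row-sum condition for the new matrix
    have hT : ∑ j ∈ univ.erase i, a i j * tc i j ^ (k+1)
        = ∑ j ∈ univ.erase i, ta i j * tc i j := by
      refine Finset.sum_congr rfl fun j hj => ?_
      have hij : i ≠ j := (Finset.ne_of_mem_erase hj).symm
      have hne : tc i j ≠ 0 := (htc i j hij).ne'
      rw [ha_off i j hij, mul_assoc, ← zpow_natCast (tc i j) (k+1), ← zpow_add₀ hne,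
        show (1:ℤ) - ((k+1 : ℕ) : ℤ) + ((k+1 : ℕ) : ℤ) = 1 by ring, zpow_one]
    rw [hT, ha_diag i]
    have hr := hrow i
    have hpos : (0:ℝ) < ((k+1 : ℕ) : ℝ) := by positivity
    have hmain := mul_neg_of_pos_of_neg hpos hr
    push_cast at hmain ⊢
    nlinarith [hmain]
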